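/- arXiv:1105.5285 — 2 statements merged into one kernel-verified Lean document; each statement's English description precedes it below -/
import Mathlib

section
/- Let λ ∈ ℂ with λ_i = Im λ > 0 and f ∈ L²((-∞, a]; H). Then for almost every t ≤ a the function s ↦ e^{−iλ(t−s)} exp(i(t−s)A) f(s) is Bochner integrable on (t, a), and the function u(t) = ∫_t^a e^{−iλ(t−s)} exp(i(t−s)A) f(s) ds belongs to L²((-∞, a]; H) with ‖u‖_{L²((-∞,a];H)} ≤ (1/λ_i) ‖f‖_{L²((-∞,a];H)}. -/
open MeasureTheory Set Complex
open scoped InnerProductSpace ENNReal NNReal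

/-- The operator exponential `exp(iτA)` for a bounded operator `A` and `τ ∈ ℝ`. -/
noncomputable def expIA {H : Type*} [NormedAddCommGroup H] [InnerProductSpace ℂ H]
    [CompleteSpace H] (A : H →L[ℂ] H) (τ : ℝ) : H →L[ℂ] H :=
  NormedSpace.exp ((Complex.I * (τ : ℂ)) • A)

section aux

open Real Filter Topology

variable {H : Type*} [NormedAddCommGroup H] [InnerProductSpace ℂ H] [CompleteSpace H]

lemma expIA_mem_unitary (A : H →L[ℂ] H) (hA : IsSelfAdjoint A) (τ : ℝ) :
    expIA A τ ∈ unitary (H →L[ℂ] H) := by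
  have h1 : IsSelfAdjoint ((τ : ℂ) • A) := by
    rw [IsSelfAdjoint, star_smul, Complex.star_def, Complex.conj_ofReal, hA.star_eq]
  let +nondep : NormedAlgebra ℚ (H →L[ℂ] H) := .restrictScalars ℚ ℂ (H →L[ℂ] H)
  have h2 := NormedSpace.exp_mem_unitary_of_mem_skewAdjoint
    (h1.smul_mem_skewAdjoint Complex.conj_I)
  rwa [expIA, mul_smul]

lemma norm_expIA_apply (A : H →L[ℂ] H) (hA : IsSelfAdjoint A) (τ : ℝ) (x : H) :
    ‖expIA A τ x‖ = ‖x‖ := by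
  set U := expIA A τ with hUdef
  have hU : star U * U = 1 := (Unitary.mem_iff.mp (expIA_mem_unitary A hA τ)).1
  have h1 : ⟪U x, U x⟫_ℂ = ⟪x, x⟫_ℂ := by
    have := ContinuousLinearMap.adjoint_inner_left U (x := x) (y := U x)
    rw [← ContinuousLinearMap.star_eq_adjoint] at this
    rw [← this]
    have : (star U) (U x) = (star U * U) x := rfl
    rw [this, hU, ContinuousLinearMap.one_apply]
  have h2 : ‖U x‖ ^ 2 = ‖x‖ ^ 2 := by
    rw [← inner_self_eq_norm_sq (𝕜 := ℂ), ← inner_self_eq_norm_sq (𝕜 := ℂ), h1]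
  exact (sq_eq_sq₀ (norm_nonneg _) (norm_nonneg _)).mp h2

lemma norm_integrand (A : H →L[ℂ] H) (hA : IsSelfAdjoint A) (lam : ℂ) (t s : ℝ) (x : H) :
    ‖Complex.exp (-Complex.I * lam * ((t : ℂ) - (s : ℂ))) • (expIA A (t - s)) x‖
      = Real.exp (lam.im * (t - s)) * ‖x‖ := by
  rw [norm_smul, norm_expIA_apply A hA, Complex.norm_exp]
  congr 2
  have h : ((t : ℂ) - (s : ℂ)) = ((t - s : ℝ) : ℂ) := by push_cast; ring
  rw [h]
  simp [Complex.mul_re, Complex.mul_im]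

lemma integrableOn_exp_shift_Ioi {b : ℝ} (hb : 0 < b) (t : ℝ) :
    IntegrableOn (fun s : ℝ => Real.exp (b * (t - s))) (Ioi t) := by
  have h := (exp_neg_integrableOn_Ioi t hb).mul_const (Real.exp (b * t))
  exact h.congr (Filter.Eventually.of_forall fun x => by
    show Real.exp (-b * x) * Real.exp (b * t) = Real.exp (b * (t - x))
    rw [← Real.exp_add]; ring_nf)

lemma integral_exp_shift_Ioi {b : ℝ} (hb : 0 < b) (t : ℝ) :
    ∫ s in Ioi t, Real.exp (b * (t - s)) = 1 / b := by
  have hderiv : ∀ x ∈ Ici t, HasDerivAt (fun s => -Real.exp (b * (t - s)) / b)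
      (Real.exp (b * (t - x))) x := by
    intro x _
    have h1 : HasDerivAt (fun s : ℝ => b * (t - s)) (-b) x := by
      simpa using ((hasDerivAt_id x).const_sub t).const_mul b
    have h2 := (h1.exp.neg.div_const b)
    refine h2.congr_deriv ?_
    field_simp
  have htend : Tendsto (fun s => -Real.exp (b * (t - s)) / b) atTop (𝓝 0) := by
    have h0 : Tendsto (fun s : ℝ => t - s) atTop atBot := by
      simp only [sub_eq_add_neg]
      exact tendsto_atBot_add_const_left atTop t tendsto_neg_atTop_atBot
    have h1 : Tendsto (fun s : ℝ => b * (t - s)) atTop atBot := h0.const_mul_atBot hb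
    have := (Real.tendsto_exp_atBot.comp h1).neg.div_const b
    simpa using this
  have := integral_Ioi_of_hasDerivAt_of_tendsto' hderiv (integrableOn_exp_shift_Ioi hb t) htend
  rw [this]
  simp [sub_self]
  field_simp

lemma integrableOn_exp_shift_Iic {b : ℝ} (hb : 0 < b) (s : ℝ) :
    IntegrableOn (fun t : ℝ => Real.exp (b * (t - s))) (Iic s) := by
  have m : MeasurableEmbedding fun x : ℝ => -x :=
    (Homeomorph.neg ℝ).isClosedEmbedding.measurableEmbedding
  rw [show (volume : Measure ℝ) = Measure.map Neg.neg volume from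
    (Measure.map_neg_eq_self (volume : Measure ℝ)).symm, IntegrableOn,
    m.restrict_map, m.integrable_map_iff]
  have hpre : (fun x : ℝ => -x) ⁻¹' Iic s = Ici (-s) := by ext x; simp [neg_le]
  show Integrable _ (volume.restrict (Neg.neg ⁻¹' Iic s))
  rw [show (Neg.neg ⁻¹' Iic s : Set ℝ) = Ici (-s) from hpre]
  rw [show (volume.restrict (Ici (-s)) : Measure ℝ) = volume.restrict (Ioi (-s)) by
    rw [restrict_Ioi_eq_restrict_Ici]]
  exact ((exp_neg_integrableOn_Ioi (-s) hb).mul_const (Real.exp (-(b * s)))).congr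
    (Filter.Eventually.of_forall fun x => by
      show Real.exp (-b * x) * Real.exp (-(b * s)) = Real.exp (b * (-x - s))
      rw [← Real.exp_add]; ring_nf)

lemma integral_exp_shift_Iic {b : ℝ} (hb : 0 < b) (s : ℝ) :
    ∫ t in Iic s, Real.exp (b * (t - s)) = 1 / b := by
  have h := integral_comp_neg_Ioi (-s) (fun t => Real.exp (b * (t - s)))
  rw [neg_neg] at h
  rw [← h, ← integral_exp_shift_Ioi hb (-s)]
  congr 1
  funext x
  ring_nf

lemma lintegral_exp_shift_Ioi {b : ℝ} (hb : 0 < b) (t : ℝ) :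
    ∫⁻ s in Ioi t, ENNReal.ofReal (Real.exp (b * (t - s))) = ENNReal.ofReal (1 / b) := by
  rw [← ofReal_integral_eq_lintegral_ofReal (integrableOn_exp_shift_Ioi hb t)
    (Filter.Eventually.of_forall fun x => (Real.exp_pos _).le), integral_exp_shift_Ioi hb]

lemma lintegral_exp_shift_Iic {b : ℝ} (hb : 0 < b) (s : ℝ) :
    ∫⁻ t in Iic s, ENNReal.ofReal (Real.exp (b * (t - s))) = ENNReal.ofReal (1 / b) := by
  rw [← ofReal_integral_eq_lintegral_ofReal (integrableOn_exp_shift_Iic hb s)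
    (Filter.Eventually.of_forall fun x => (Real.exp_pos _).le), integral_exp_shift_Iic hb]

end aux

set_option maxHeartbeats 2000000
set_option synthInstance.maxHeartbeats 200000

/-- For `Im λ > 0` and `f ∈ L²((-∞, a]; H)`, for a.e. `t ≤ a` the integrand
`s ↦ e^{−iλ(t−s)} exp(i(t−s)A) f(s)` is Bochner integrable on `(t, a)`, and
`u(t) = ∫_t^a e^{−iλ(t−s)} exp(i(t−s)A) f(s) ds` lies in `L²((-∞, a]; H)` with
`‖u‖ ≤ (1/Im λ) ‖f‖`. -/
theorem volterra_bound_left_halfline_upper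
    {H : Type*} [NormedAddCommGroup H] [InnerProductSpace ℂ H] [CompleteSpace H]
    (A : H →L[ℂ] H) (hA : IsSelfAdjoint A) (a : ℝ) (lam : ℂ) (hlam : 0 < lam.im)
    (f : ℝ → H) (hf : MemLp f 2 (volume.restrict (Set.Iic a)))
    (u : ℝ → H)
    (hu : u = fun t : ℝ => ∫ s in Set.Ioo t a,
      Complex.exp (-Complex.I * lam * ((t : ℂ) - (s : ℂ))) • (expIA A (t - s)) (f s)) :
    (∀ᵐ (t : ℝ) ∂(volume.restrict (Set.Iic a)),
      IntegrableOn (fun s : ℝ =>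
        Complex.exp (-Complex.I * lam * ((t : ℂ) - (s : ℂ))) • (expIA A (t - s)) (f s))
        (Set.Ioo t a) volume)
    ∧ MemLp u 2 (volume.restrict (Set.Iic a))
    ∧ eLpNorm u 2 (volume.restrict (Set.Iic a))
        ≤ ENNReal.ofReal (1 / lam.im) * eLpNorm f 2 (volume.restrict (Set.Iic a)) := by
  haveI : SecondCountableTopologyEither (ℝ × ℝ) (H →L[ℂ] H) := ⟨Or.inl inferInstance⟩
  subst hu
  set μ : Measure ℝ := volume.restrict (Iic a) with hμ
  obtain ⟨hfm, hftop⟩ := hf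
  set g : ℝ → H := hfm.mk f with hg
  have hgsm : StronglyMeasurable g := hfm.stronglyMeasurable_mk
  have hfg : f =ᵐ[μ] g := hfm.ae_eq_mk
  have hsub : ∀ t : ℝ, Ioo t a ⊆ Iic a := fun t x hx => le_of_lt hx.2
  have hfg' : ∀ t : ℝ, f =ᵐ[volume.restrict (Ioo t a)] g := fun t =>
    ae_restrict_of_ae_restrict_of_subset (hsub t) hfg
  -- continuity/measurability of the kernel
  have hEcont : Continuous (fun τ : ℝ => expIA A τ) := by
    unfold expIA
    let +nondep : NormedAlgebra ℚ (H →L[ℂ] H) := .restrictScalars ℚ ℂ (H →L[ℂ] H)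
    exact NormedSpace.exp_continuous.comp
      ((continuous_const.mul Complex.continuous_ofReal).smul continuous_const)
  have hccont : Continuous fun p : ℝ × ℝ =>
      Complex.exp (-Complex.I * lam * ((p.1 : ℂ) - (p.2 : ℂ))) := by
    apply Complex.continuous_exp.comp
    exact continuous_const.mul ((Complex.continuous_ofReal.comp continuous_fst).sub
      (Complex.continuous_ofReal.comp continuous_snd))
  have hKsm : StronglyMeasurable (fun p : ℝ × ℝ =>
      Complex.exp (-Complex.I * lam * ((p.1 : ℂ) - (p.2 : ℂ))) •
        (expIA A (p.1 - p.2)) (g p.2)) := by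
    have h1 : StronglyMeasurable fun p : ℝ × ℝ =>
        ((expIA A (p.1 - p.2), g p.2) : (H →L[ℂ] H) × H) :=
      ((hEcont.comp (continuous_fst.sub continuous_snd)).stronglyMeasurable).prodMk
        (hgsm.comp_measurable measurable_snd)
    exact hccont.stronglyMeasurable.smul
      (isBoundedBilinearMap_apply.continuous.comp_stronglyMeasurable h1)
  have hKt : ∀ t : ℝ, StronglyMeasurable (fun s : ℝ =>
      Complex.exp (-Complex.I * lam * ((t : ℂ) - (s : ℂ))) • (expIA A (t - s)) (g s)) :=
    fun t => StronglyMeasurable.of_uncurry_left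
      (show StronglyMeasurable (Function.uncurry fun t s : ℝ =>
        Complex.exp (-Complex.I * lam * ((t : ℂ) - (s : ℂ))) • (expIA A (t - s)) (g s))
        from hKsm)
  -- Part 1 : integrability for every t
  have part1 : ∀ t : ℝ, IntegrableOn (fun s : ℝ =>
      Complex.exp (-Complex.I * lam * ((t : ℂ) - (s : ℂ))) • (expIA A (t - s)) (f s))
      (Ioo t a) volume := by
    intro t
    haveI : IsFiniteMeasure (volume.restrict (Ioo t a)) := ⟨by
      rw [Measure.restrict_apply_univ, Real.volume_Ioo]
      exact ENNReal.ofReal_lt_top⟩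
    have hfI : Integrable f (volume.restrict (Ioo t a)) :=
      (MemLp.mono_measure (Measure.restrict_mono (hsub t) le_rfl) ⟨hfm, hftop⟩).integrable
        (by norm_num)
    have haesm : AEStronglyMeasurable (fun s : ℝ =>
        Complex.exp (-Complex.I * lam * ((t : ℂ) - (s : ℂ))) • (expIA A (t - s)) (f s))
        (volume.restrict (Ioo t a)) := by
      refine ⟨_, hKt t, ?_⟩
      filter_upwards [hfg' t] with s hs
      rw [hs]
    refine hfI.norm.mono' haesm ?_
    filter_upwards [ae_restrict_mem measurableSet_Ioo] with s hs
    rw [norm_integrand A hA]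
    have h1 : Real.exp (lam.im * (t - s)) ≤ 1 := by
      rw [Real.exp_le_one_iff]
      exact mul_nonpos_of_nonneg_of_nonpos hlam.le (by linarith [hs.1])
    calc Real.exp (lam.im * (t - s)) * ‖f s‖ ≤ 1 * ‖f s‖ :=
          mul_le_mul_of_nonneg_right h1 (norm_nonneg _)
      _ = ‖f s‖ := one_mul _
  -- strong measurability of u
  set S : Set (ℝ × ℝ) := {q : ℝ × ℝ | q.1 < q.2 ∧ q.2 < a} with hS
  have hSm : MeasurableSet S := by
    have : S = {q : ℝ × ℝ | q.1 < q.2} ∩ {q : ℝ × ℝ | q.2 < a} := rfl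
    rw [this]
    exact (measurableSet_lt measurable_fst measurable_snd).inter
      (measurableSet_lt measurable_snd measurable_const)
  have husm : AEStronglyMeasurable (fun t : ℝ => ∫ s in Ioo t a,
      Complex.exp (-Complex.I * lam * ((t : ℂ) - (s : ℂ))) • (expIA A (t - s)) (f s)) μ := by
    set Wv : ℝ × ℝ → H := S.indicator (fun q : ℝ × ℝ =>
      Complex.exp (-Complex.I * lam * ((q.1 : ℂ) - (q.2 : ℂ))) •
        (expIA A (q.1 - q.2)) (g q.2)) with hWv
    have hWvm : StronglyMeasurable Wv := hKsm.indicator hSm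
    have hvm : StronglyMeasurable (fun t : ℝ => ∫ s, Wv (t, s)) :=
      hWvm.integral_prod_right'
    have hueq : (fun t : ℝ => ∫ s in Ioo t a,
        Complex.exp (-Complex.I * lam * ((t : ℂ) - (s : ℂ))) • (expIA A (t - s)) (f s))
        = fun t : ℝ => ∫ s, Wv (t, s) := by
      funext t
      have h1 : ∫ s, Wv (t, s) = ∫ s in Ioo t a,
          Complex.exp (-Complex.I * lam * ((t : ℂ) - (s : ℂ))) • (expIA A (t - s)) (g s) := by
        rw [← integral_indicator measurableSet_Ioo]
        refine integral_congr_ae (Filter.Eventually.of_forall fun s => ?_)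
        by_cases h : t < s ∧ s < a
        · simp [hWv, hS, Set.indicator_apply, Set.mem_Ioo, Set.mem_setOf_eq, h.1, h.2]
        · simp [hWv, hS, Set.indicator_apply, Set.mem_Ioo, Set.mem_setOf_eq, h]
      rw [h1]
      exact integral_congr_ae (by filter_upwards [hfg' t] with s hs; rw [hs])
    rw [hueq]
    exact hvm.aestronglyMeasurable
  -- key quantities
  set K : ℝ → ℝ → ℝ≥0∞ := fun t s => ENNReal.ofReal (Real.exp (lam.im * (t - s))) with hK
  set φ : ℝ → ℝ≥0∞ := fun s => (‖g s‖₊ : ℝ≥0∞) with hφ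
  set C : ℝ≥0∞ := ENNReal.ofReal (1 / lam.im) with hC
  have hCtop : C ≠ ⊤ := ENNReal.ofReal_ne_top
  have hφm : Measurable φ := hgsm.enorm
  have hKm : ∀ t, Measurable (K t) := fun t =>
    (ENNReal.continuous_ofReal.comp (Real.continuous_exp.comp
      (continuous_const.mul (continuous_const.sub continuous_id)))).measurable
  have hKm' : ∀ s, Measurable fun t => K t s := fun s =>
    (ENNReal.continuous_ofReal.comp (Real.continuous_exp.comp
      (continuous_const.mul (continuous_id.sub continuous_const)))).measurable
  have hKne : ∀ t s, K t s ≠ 0 := fun t s =>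
    (ENNReal.ofReal_pos.mpr (Real.exp_pos _)).ne'
  have hKtop : ∀ t s, K t s ≠ ⊤ := fun t s => ENNReal.ofReal_ne_top
  -- step (i)
  have hnorm_u : ∀ t : ℝ, (‖∫ s in Ioo t a,
      Complex.exp (-Complex.I * lam * ((t : ℂ) - (s : ℂ))) • (expIA A (t - s)) (f s)‖₊ : ℝ≥0∞)
      ≤ ∫⁻ s in Ioo t a, K t s * φ s := by
    intro t
    calc (‖∫ s in Ioo t a,
        Complex.exp (-Complex.I * lam * ((t : ℂ) - (s : ℂ))) • (expIA A (t - s)) (f s)‖₊ : ℝ≥0∞)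
        ≤ ∫⁻ s in Ioo t a, ‖Complex.exp (-Complex.I * lam * ((t : ℂ) - (s : ℂ))) •
            (expIA A (t - s)) (f s)‖₊ := enorm_integral_le_lintegral_enorm _
      _ = ∫⁻ s in Ioo t a, K t s * (‖f s‖₊ : ℝ≥0∞) := by
          apply lintegral_congr
          intro s
          rw [← enorm_eq_nnnorm, ← enorm_eq_nnnorm, ← ofReal_norm_eq_enorm, ← ofReal_norm_eq_enorm, norm_integrand A hA,
            ENNReal.ofReal_mul (Real.exp_nonneg _)]
      _ = ∫⁻ s in Ioo t a, K t s * φ s := by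
          apply lintegral_congr_ae
          filter_upwards [hfg' t] with s hs
          rw [hs]
  -- step (ii) : Cauchy-Schwarz
  have hCS : ∀ t : ℝ, (∫⁻ s in Ioo t a, K t s * φ s) ^ (2:ℝ)
      ≤ C * ∫⁻ s in Ioo t a, K t s * φ s ^ (2:ℝ) := by
    intro t
    have h22 : Real.HolderConjugate 2 2 := Real.HolderConjugate.two_two
    have hhalf : ∀ x : ℝ≥0∞, x ≠ 0 → x ≠ ⊤ → x ^ ((2:ℝ)⁻¹) * x ^ ((2:ℝ)⁻¹) = x := by
      intro x hx0 hxt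
      rw [← ENNReal.rpow_add _ _ hx0 hxt]
      norm_num
    have key := ENNReal.lintegral_mul_le_Lp_mul_Lq (volume.restrict (Ioo t a)) h22
      (f := fun s => K t s ^ ((2:ℝ)⁻¹)) (g := fun s => K t s ^ ((2:ℝ)⁻¹) * φ s)
      ((hKm t).pow_const _).aemeasurable (((hKm t).pow_const _).mul hφm).aemeasurable
    have hfg_eq : ∀ s, (K t s ^ ((2:ℝ)⁻¹)) * (K t s ^ ((2:ℝ)⁻¹) * φ s) = K t s * φ s := by
      intro s
      rw [← mul_assoc, hhalf _ (hKne t s) (hKtop t s)]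
    have hf2 : ∀ s, (K t s ^ ((2:ℝ)⁻¹)) ^ (2:ℝ) = K t s := by
      intro s
      rw [← ENNReal.rpow_mul]
      norm_num
    have hg2 : ∀ s, (K t s ^ ((2:ℝ)⁻¹) * φ s) ^ (2:ℝ) = K t s * φ s ^ (2:ℝ) := by
      intro s
      rw [ENNReal.mul_rpow_of_nonneg _ _ (by norm_num : (0:ℝ) ≤ 2), hf2]
    simp only [Pi.mul_apply, hfg_eq, hf2, hg2] at key
    have key2 : (∫⁻ s in Ioo t a, K t s * φ s) ^ (2:ℝ)
        ≤ (∫⁻ s in Ioo t a, K t s) * ∫⁻ s in Ioo t a, K t s * φ s ^ (2:ℝ) := by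
      calc (∫⁻ s in Ioo t a, K t s * φ s) ^ (2:ℝ)
          ≤ ((∫⁻ s in Ioo t a, K t s) ^ (1/(2:ℝ)) *
            (∫⁻ s in Ioo t a, K t s * φ s ^ (2:ℝ)) ^ (1/(2:ℝ))) ^ (2:ℝ) :=
            ENNReal.rpow_le_rpow key (by norm_num)
        _ = (∫⁻ s in Ioo t a, K t s) * ∫⁻ s in Ioo t a, K t s * φ s ^ (2:ℝ) := by
            rw [ENNReal.mul_rpow_of_nonneg _ _ (by norm_num : (0:ℝ) ≤ 2),
              ← ENNReal.rpow_mul, ← ENNReal.rpow_mul]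
            norm_num
    refine key2.trans (mul_le_mul_left ?_ _)
    calc ∫⁻ s in Ioo t a, K t s ≤ ∫⁻ s in Ioi t, K t s :=
          lintegral_mono_set Ioo_subset_Ioi_self
      _ = C := lintegral_exp_shift_Ioi hlam t
  -- step (iii) : swap
  have hswap : ∫⁻ t in Iic a, (∫⁻ s in Ioo t a, K t s * φ s ^ (2:ℝ))
      ≤ C * ∫⁻ s in Iic a, φ s ^ (2:ℝ) := by
    set W : ℝ × ℝ → ℝ≥0∞ := S.indicator (fun p : ℝ × ℝ => K p.1 p.2 * φ p.2 ^ (2:ℝ)) with hW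
    have hWm : Measurable W := by
      apply Measurable.indicator _ hSm
      exact ((ENNReal.continuous_ofReal.comp (Real.continuous_exp.comp
        (continuous_const.mul (continuous_fst.sub continuous_snd)))).measurable).mul
        ((hφm.comp measurable_snd).pow_const _)
    have h1 : ∫⁻ t in Iic a, (∫⁻ s in Ioo t a, K t s * φ s ^ (2:ℝ))
        = ∫⁻ t, ∫⁻ s, W (t, s) := by
      rw [← lintegral_indicator measurableSet_Iic]
      apply lintegral_congr
      intro t
      by_cases ht : t ∈ Iic a
      · rw [indicator_of_mem ht, ← lintegral_indicator measurableSet_Ioo]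
        apply lintegral_congr
        intro s
        by_cases h : t < s ∧ s < a
        · simp [hW, hS, Set.indicator_apply, Set.mem_Ioo, Set.mem_setOf_eq, h.1, h.2]
        · simp [hW, hS, Set.indicator_apply, Set.mem_Ioo, Set.mem_setOf_eq, h]
      · rw [indicator_of_notMem ht]
        symm
        have : ∀ s : ℝ, W (t, s) = 0 := by
          intro s
          rw [hW]
          apply indicator_of_notMem
          rintro ⟨h1', h2'⟩
          exact ht (le_of_lt (h1'.trans h2'))
        simp [this]
    have h2 : ∫⁻ t, ∫⁻ s, W (t, s) = ∫⁻ s, ∫⁻ t, W (t, s) :=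
      lintegral_lintegral_swap hWm.aemeasurable
    have h3 : ∫⁻ s, ∫⁻ t, W (t, s) ≤ ∫⁻ s, (Iic a).indicator (fun s => C * φ s ^ (2:ℝ)) s := by
      apply lintegral_mono
      intro s
      show (∫⁻ t, W (t, s)) ≤ (Iic a).indicator (fun s => C * φ s ^ (2:ℝ)) s
      by_cases hs' : s < a
      · have hin : ∫⁻ t, W (t, s) = ∫⁻ t in Iio s, K t s * φ s ^ (2:ℝ) := by
          rw [← lintegral_indicator measurableSet_Iio]
          apply lintegral_congr
          intro t
          by_cases h : t < s
          · simp [hW, hS, Set.indicator_apply, Set.mem_Iio, Set.mem_setOf_eq, h, hs']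
          · simp [hW, hS, Set.indicator_apply, Set.mem_Iio, Set.mem_setOf_eq, h]
        rw [hin, Set.indicator_of_mem (show s ∈ Iic a from le_of_lt hs')]
        calc ∫⁻ t in Iio s, K t s * φ s ^ (2:ℝ)
            = (∫⁻ t in Iio s, K t s) * φ s ^ (2:ℝ) :=
              lintegral_mul_const'' _ (hKm' s).aemeasurable
          _ ≤ C * φ s ^ (2:ℝ) := by
              apply mul_le_mul_left
              calc ∫⁻ t in Iio s, K t s ≤ ∫⁻ t in Iic s, K t s :=
                    lintegral_mono_set Iio_subset_Iic_self
                _ = C := lintegral_exp_shift_Iic hlam s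
      · have : ∀ t : ℝ, W (t, s) = 0 := by
          intro t
          rw [hW]
          apply indicator_of_notMem
          rintro ⟨_, h2'⟩
          exact hs' h2'
        simp [this]
    have h4 : ∫⁻ s, (Iic a).indicator (fun s => C * φ s ^ (2:ℝ)) s
        = C * ∫⁻ s in Iic a, φ s ^ (2:ℝ) := by
      rw [lintegral_indicator measurableSet_Iic, lintegral_const_mul' _ _ hCtop]
    rw [h1, h2, ← h4]
    exact h3
  -- assemble
  have key : ∫⁻ t in Iic a, (‖∫ s in Ioo t a,
      Complex.exp (-Complex.I * lam * ((t : ℂ) - (s : ℂ))) • (expIA A (t - s)) (f s)‖₊ : ℝ≥0∞)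
        ^ (2:ℝ)
      ≤ C ^ (2:ℝ) * ∫⁻ s in Iic a, φ s ^ (2:ℝ) := by
    calc ∫⁻ t in Iic a, (‖∫ s in Ioo t a,
        Complex.exp (-Complex.I * lam * ((t : ℂ) - (s : ℂ))) • (expIA A (t - s)) (f s)‖₊ : ℝ≥0∞)
          ^ (2:ℝ)
        ≤ ∫⁻ t in Iic a, (∫⁻ s in Ioo t a, K t s * φ s) ^ (2:ℝ) :=
          lintegral_mono fun t => ENNReal.rpow_le_rpow (hnorm_u t) (by norm_num)
      _ ≤ ∫⁻ t in Iic a, C * ∫⁻ s in Ioo t a, K t s * φ s ^ (2:ℝ) := lintegral_mono hCS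
      _ = C * ∫⁻ t in Iic a, ∫⁻ s in Ioo t a, K t s * φ s ^ (2:ℝ) :=
          lintegral_const_mul' _ _ hCtop
      _ ≤ C * (C * ∫⁻ s in Iic a, φ s ^ (2:ℝ)) := mul_le_mul_right hswap _
      _ = C ^ (2:ℝ) * ∫⁻ s in Iic a, φ s ^ (2:ℝ) := by
          rw [← mul_assoc]
          congr 1
          rw [show ((2:ℝ)) = ((2:ℕ):ℝ) by norm_num, ENNReal.rpow_natCast, pow_two]
  have heLp : eLpNorm (fun t : ℝ => ∫ s in Ioo t a,
      Complex.exp (-Complex.I * lam * ((t : ℂ) - (s : ℂ))) • (expIA A (t - s)) (f s)) 2 μ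
      ≤ C * eLpNorm f 2 μ := by
    rw [eLpNorm_eq_lintegral_rpow_enorm_toReal two_ne_zero ENNReal.ofNat_ne_top,
      eLpNorm_congr_ae hfg, eLpNorm_eq_lintegral_rpow_enorm_toReal two_ne_zero ENNReal.ofNat_ne_top]
    simp only [ENNReal.toReal_ofNat]
    calc (∫⁻ t, (‖∫ s in Ioo t a,
        Complex.exp (-Complex.I * lam * ((t : ℂ) - (s : ℂ))) • (expIA A (t - s)) (f s)‖₊ : ℝ≥0∞)
          ^ (2:ℝ) ∂μ) ^ (1/(2:ℝ))
        ≤ (C ^ (2:ℝ) * ∫⁻ s in Iic a, φ s ^ (2:ℝ)) ^ (1/(2:ℝ)) :=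
          ENNReal.rpow_le_rpow key (by norm_num)
      _ = C * (∫⁻ s, φ s ^ (2:ℝ) ∂μ) ^ (1/(2:ℝ)) := by
          rw [ENNReal.mul_rpow_of_nonneg _ _ (by norm_num : (0:ℝ) ≤ 1/2),
            ← ENNReal.rpow_mul]
          norm_num
          rfl
  refine ⟨ae_of_all _ part1, ⟨husm, ?_⟩, heLp⟩
  exact lt_of_le_of_lt heLp (ENNReal.mul_lt_top (lt_of_le_of_ne le_top hCtop) hftop)
end

section
/- Let λ ∈ ℂ with λ_i = Im λ < 0 and f ∈ L²((-∞, a]; H). Then for almost every t ≤ a the function s ↦ e^{−iλ(t−s)} exp(i(t−s)A) f(s) is Bochner integrable on (-∞, t), and the function u(t) = ∫_{-∞}^t e^{−iλ(t−s)} exp(i(t−s)A) f(s) ds belongs to L²((-∞, a]; H) with ‖u‖_{L²((-∞,a];H)} ≤ (1/|λ_i|) ‖f‖_{L²((-∞,a];H)}. -/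
open MeasureTheory Set Complex
open scoped InnerProductSpace ENNReal NNReal

section Aux

open scoped ENNReal NNReal

lemma aux_lint_exp_Ioi0 {c : ℝ} (hc : 0 < c) :
    ∫⁻ x in Ioi (0 : ℝ), ENNReal.ofReal (Real.exp (-(c * x))) = ENNReal.ofReal (1 / c) := by
  rw [← ofReal_integral_eq_lintegral_ofReal]
  · congr 1
    have h := integral_comp_mul_left_Ioi (fun y => Real.exp (-y)) 0 hc
    simp only [mul_zero] at h
    rw [h, integral_exp_neg_Ioi_zero]
    simp [one_div]
  · have hi := exp_neg_integrableOn_Ioi 0 hc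
    simp only [neg_mul] at hi
    exact hi
  · exact Filter.Eventually.of_forall fun x => (Real.exp_pos _).le

lemma aux_lint_exp_Iio {c : ℝ} (hc : 0 < c) (t : ℝ) :
    ∫⁻ s in Iio t, ENNReal.ofReal (Real.exp (-(c * (t - s)))) = ENNReal.ofReal (1 / c) := by
  have hemb : MeasurableEmbedding (fun x : ℝ => t - x) :=
    (MeasurableEquiv.subLeft t).measurableEmbedding
  have hmp : MeasurePreserving (fun x : ℝ => t - x) volume volume :=
    Measure.measurePreserving_sub_left volume t
  have h := hmp.setLIntegral_comp_emb hemb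
    (fun s => ENNReal.ofReal (Real.exp (-(c * (t - s))))) (Ioi 0)
  rw [image_const_sub_Ioi, sub_zero] at h
  rw [← h]
  simp_rw [sub_sub_cancel]
  exact aux_lint_exp_Ioi0 hc

lemma aux_lint_exp_Ioi {c : ℝ} (hc : 0 < c) (s : ℝ) :
    ∫⁻ t in Ioi s, ENNReal.ofReal (Real.exp (-(c * (t - s)))) = ENNReal.ofReal (1 / c) := by
  have hemb : MeasurableEmbedding (fun x : ℝ => s + x) :=
    (MeasurableEquiv.addLeft s).measurableEmbedding
  have hmp : MeasurePreserving (fun x : ℝ => s + x) volume volume :=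
    measurePreserving_add_left volume s
  have h := hmp.setLIntegral_comp_emb hemb
    (fun t => ENNReal.ofReal (Real.exp (-(c * (t - s))))) (Ioi 0)
  rw [image_const_add_Ioi, add_zero] at h
  rw [← h]
  simp_rw [add_sub_cancel_left]
  exact aux_lint_exp_Ioi0 hc

lemma expIA_norm_apply {H : Type*} [NormedAddCommGroup H] [InnerProductSpace ℂ H]
    [CompleteSpace H] (A : H →L[ℂ] H) (hA : IsSelfAdjoint A) (τ : ℝ) (x : H) :
    ‖expIA A τ x‖ = ‖x‖ := by
  have h1 : IsSelfAdjoint ((τ : ℂ) • A) := by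
    rw [IsSelfAdjoint, star_smul, hA.star_eq, Complex.star_def, Complex.conj_ofReal]
  have h2 : expIA A τ ∈ unitary (H →L[ℂ] H) := by
    have heq : (Complex.I * (τ : ℂ)) • A = Complex.I • ((τ : ℂ) • A) := by
      rw [smul_smul]
    rw [expIA, heq]
    let +nondep : NormedAlgebra ℚ (H →L[ℂ] H) := NormedAlgebra.restrictScalars ℚ ℂ _
    exact NormedSpace.exp_mem_unitary_of_mem_skewAdjoint
      (h1.smul_mem_skewAdjoint Complex.conj_I)
  exact ContinuousLinearMap.norm_map_of_mem_unitary h2 x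

lemma enorm_integrand {H : Type*} [NormedAddCommGroup H] [InnerProductSpace ℂ H]
    [CompleteSpace H] (A : H →L[ℂ] H) (hA : IsSelfAdjoint A) (lam : ℂ) (t s : ℝ) (x : H) :
    (‖Complex.exp (-Complex.I * lam * ((t : ℂ) - (s : ℂ))) • (expIA A (t - s)) x‖₊ : ℝ≥0∞)
      = ENNReal.ofReal (Real.exp (lam.im * (t - s))) * (‖x‖₊ : ℝ≥0∞) := by
  have hre : (-Complex.I * lam * ((t : ℂ) - (s : ℂ))).re = lam.im * (t - s) := by
    simp [Complex.mul_re, Complex.mul_im]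
  rw [← enorm_eq_nnnorm, ← enorm_eq_nnnorm, ← ofReal_norm, ← ofReal_norm, norm_smul,
    Complex.norm_exp, hre, expIA_norm_apply A hA,
    ENNReal.ofReal_mul (Real.exp_pos _).le]

end Aux

lemma aux_SM {H : Type*} [NormedAddCommGroup H] [InnerProductSpace ℂ H] [CompleteSpace H]
    (T : ℝ → (H →L[ℂ] H)) (hT : Continuous T) {g : ℝ → H} (hg : StronglyMeasurable g)
    (c : ℝ × ℝ → ℂ) (hc : Continuous c) :
    StronglyMeasurable fun p : ℝ × ℝ => c p • (T (p.1 - p.2)) (g p.2) := by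
  have e : Continuous fun q : ℝ × H => T q.1 q.2 :=
    isBoundedBilinearMap_apply.continuous.comp ((hT.comp continuous_fst).prodMk continuous_snd)
  have hpair : StronglyMeasurable fun p : ℝ × ℝ => (p.1 - p.2, g p.2) :=
    (measurable_fst.sub measurable_snd).stronglyMeasurable.prodMk
      (hg.comp_measurable measurable_snd)
  exact hc.stronglyMeasurable.smul (e.comp_stronglyMeasurable hpair)

set_option maxHeartbeats 1600000 in
set_option synthInstance.maxHeartbeats 200000 in
/-- For `Im λ < 0` and `f ∈ L²((-∞, a]; H)`, for a.e. `t ≤ a` the integrand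
`s ↦ e^{−iλ(t−s)} exp(i(t−s)A) f(s)` is Bochner integrable on `(-∞, t)`, and
`u(t) = ∫_{-∞}^t e^{−iλ(t−s)} exp(i(t−s)A) f(s) ds` lies in `L²((-∞, a]; H)` with
`‖u‖ ≤ (1/|Im λ|) ‖f‖`. -/
theorem volterra_bound_left_halfline_lower
    {H : Type*} [NormedAddCommGroup H] [InnerProductSpace ℂ H] [CompleteSpace H]
    (A : H →L[ℂ] H) (hA : IsSelfAdjoint A) (a : ℝ) (lam : ℂ) (hlam : lam.im < 0)
    (f : ℝ → H) (hf : MemLp f 2 (volume.restrict (Set.Iic a)))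
    (u : ℝ → H)
    (hu : u = fun t : ℝ => ∫ s in Set.Iio t,
      Complex.exp (-Complex.I * lam * ((t : ℂ) - (s : ℂ))) • (expIA A (t - s)) (f s)) :
    (∀ᵐ (t : ℝ) ∂(volume.restrict (Set.Iic a)),
      IntegrableOn (fun s : ℝ =>
        Complex.exp (-Complex.I * lam * ((t : ℂ) - (s : ℂ))) • (expIA A (t - s)) (f s))
        (Set.Iio t) volume)
    ∧ MemLp u 2 (volume.restrict (Set.Iic a))
    ∧ eLpNorm u 2 (volume.restrict (Set.Iic a))
        ≤ ENNReal.ofReal (1 / |lam.im|) * eLpNorm f 2 (volume.restrict (Set.Iic a)) := by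
  subst hu
  have habs : |lam.im| = -lam.im := abs_of_neg hlam
  have hc : 0 < -lam.im := neg_pos.mpr hlam
  set μ := volume.restrict (Set.Iic a) with hμ
  set C : ℝ≥0∞ := ENNReal.ofReal (1 / (-lam.im)) with hC
  have hCne : C ≠ ⊤ := ENNReal.ofReal_ne_top
  obtain ⟨g0, hg0, hfg0⟩ := hf.1
  set g : ℝ → H := (Set.Iic a).indicator g0 with hgdef
  have hg : StronglyMeasurable g := hg0.indicator measurableSet_Iic
  have hfg : f =ᵐ[μ] g := by
    refine hfg0.trans ?_
    filter_upwards [ae_restrict_mem measurableSet_Iic] with s hs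
    simp [hgdef, Set.indicator_of_mem hs]
  have hfg' : ∀ᵐ s ∂(volume : Measure ℝ), s ∈ Set.Iic a → f s = g s :=
    (ae_restrict_iff' measurableSet_Iic).mp hfg
  have hfg_t : ∀ t : ℝ, t ≤ a → f =ᵐ[volume.restrict (Set.Iio t)] g := by
    intro t ht
    filter_upwards [ae_restrict_of_ae hfg', ae_restrict_mem measurableSet_Iio] with s h1 h2
    exact h1 (le_trans (le_of_lt h2) ht)
  set K : ℝ → ℝ → ℝ≥0∞ := fun t s => ENNReal.ofReal (Real.exp (lam.im * (t - s))) with hK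
  set φ : ℝ → ℝ≥0∞ := fun s => (‖g s‖₊ : ℝ≥0∞) with hφ
  have hKrw : ∀ t s : ℝ, lam.im * (t - s) = -((-lam.im) * (t - s)) := fun t s => by ring
  have hKint_s : ∀ t : ℝ, ∫⁻ s in Set.Iio t, K t s = C := by
    intro t
    simp only [hK, hKrw]
    exact aux_lint_exp_Iio hc t
  have hKint_t : ∀ s : ℝ, ∫⁻ t in Set.Ioi s, K t s = C := by
    intro s
    simp only [hK, hKrw]
    exact aux_lint_exp_Ioi hc s
  have hφmeas : Measurable φ := hg.enorm
  have hφ2meas : Measurable fun s => φ s ^ (2:ℝ) :=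
    ENNReal.continuous_rpow_const.measurable.comp hφmeas
  have hKmeas_s : ∀ t : ℝ, Measurable fun s => K t s := fun t =>
    (Real.continuous_exp.comp
      (continuous_const.mul (continuous_const.sub continuous_id))).measurable.ennreal_ofReal
  have hKmeas_t : ∀ s : ℝ, Measurable fun t => K t s := fun s =>
    (Real.continuous_exp.comp
      (continuous_const.mul (continuous_id.sub continuous_const))).measurable.ennreal_ofReal
  have hsq : ∀ x : ℝ≥0∞, x ^ (2:ℝ) = x * x := fun x => by
    rw [show (2:ℝ) = ((2:ℕ):ℝ) by norm_num, ENNReal.rpow_natCast, sq]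
  set Fg : ℝ × ℝ → H := fun p =>
    Complex.exp (-Complex.I * lam * ((p.1 : ℂ) - (p.2 : ℂ))) • (expIA A (p.1 - p.2)) (g p.2)
    with hFgdef
  have hFgSM : StronglyMeasurable Fg := by
    have hcont1 : Continuous fun p : ℝ × ℝ =>
        Complex.exp (-Complex.I * lam * ((p.1 : ℂ) - (p.2 : ℂ))) := by
      apply Complex.continuous_exp.comp
      exact continuous_const.mul ((Complex.continuous_ofReal.comp continuous_fst).sub
        (Complex.continuous_ofReal.comp continuous_snd))
    have h3 : Continuous fun τ : ℝ => expIA A τ := by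
      unfold expIA
      let +nondep : NormedAlgebra ℚ (H →L[ℂ] H) := NormedAlgebra.restrictScalars ℚ ℂ _
      exact NormedSpace.exp_continuous.comp
        ((continuous_const.mul Complex.continuous_ofReal).smul continuous_const)
    exact aux_SM (expIA A) h3 hg _ hcont1
  have hFg_norm : ∀ t s : ℝ, (‖Fg (t, s)‖₊ : ℝ≥0∞) = K t s * φ s := fun t s =>
    enorm_integrand A hA lam t s (g s)
  set J : ℝ × ℝ → H := ({p : ℝ × ℝ | p.2 < p.1}).indicator Fg with hJdef
  have hJSM : StronglyMeasurable J :=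
    hFgSM.indicator (measurableSet_lt measurable_snd measurable_fst)
  set v : ℝ → H := fun t => ∫ s, J (t, s) with hvdef
  have hvSM : StronglyMeasurable v := hJSM.integral_prod_right'
  have hv_eq : ∀ t : ℝ, v t = ∫ s in Set.Iio t, Fg (t, s) := by
    intro t
    rw [hvdef]
    dsimp only
    rw [← integral_indicator measurableSet_Iio]
    refine integral_congr_ae (Filter.Eventually.of_forall fun s => ?_)
    by_cases h : s < t
    · simp [hJdef, Set.indicator_apply, h]
    · simp [hJdef, Set.indicator_apply, h]
  have huv : ∀ t : ℝ, t ≤ a →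
      (∫ s in Set.Iio t,
        Complex.exp (-Complex.I * lam * ((t : ℂ) - (s : ℂ))) • (expIA A (t - s)) (f s)) = v t := by
    intro t ht
    rw [hv_eq t]
    refine integral_congr_ae ?_
    filter_upwards [hfg_t t ht] with s hs
    simp only [hFgdef, hs]
  set W : ℝ → ℝ≥0∞ := fun t => ∫⁻ s in Set.Iio t, K t s * φ s ^ (2:ℝ) with hWdef
  have holder : ∀ t : ℝ, (∫⁻ s in Set.Iio t, K t s * φ s)
      ≤ C ^ (1/2 : ℝ) * (W t) ^ (1/2 : ℝ) := by
    intro t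
    have conj : Real.HolderConjugate 2 2 := Real.HolderConjugate.two_two
    have hm0 : Measurable fun s => (K t s) ^ (1/2 : ℝ) :=
      ENNReal.continuous_rpow_const.measurable.comp (hKmeas_s t)
    have h := ENNReal.lintegral_mul_le_Lp_mul_Lq (volume.restrict (Set.Iio t)) conj
      hm0.aemeasurable (hm0.mul hφmeas).aemeasurable
    simp only [Pi.mul_apply] at h
    have e1 : ∀ s : ℝ, (K t s) ^ (1/2:ℝ) * ((K t s) ^ (1/2:ℝ) * φ s) = K t s * φ s := by
      intro s
      rw [← mul_assoc, ← ENNReal.rpow_add_of_nonneg (1/2) (1/2) (by norm_num) (by norm_num)]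
      norm_num
    have e2 : ∀ s : ℝ, ((K t s) ^ (1/2:ℝ)) ^ (2:ℝ) = K t s := by
      intro s
      rw [← ENNReal.rpow_mul]
      norm_num
    have e3 : ∀ s : ℝ, ((K t s) ^ (1/2:ℝ) * φ s) ^ (2:ℝ) = K t s * φ s ^ (2:ℝ) := by
      intro s
      rw [ENNReal.mul_rpow_of_nonneg _ _ (by norm_num : (0:ℝ) ≤ 2), e2 s]
    simp only [e1, e2, e3] at h
    rw [hKint_s t] at h
    exact h
  have hv_bound : ∀ t : ℝ, (‖v t‖₊ : ℝ≥0∞) ^ (2:ℝ) ≤ C * W t := by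
    intro t
    have h0 : (‖v t‖₊ : ℝ≥0∞) ≤ ∫⁻ s in Set.Iio t, K t s * φ s := by
      rw [hv_eq t]
      refine le_trans (enorm_integral_le_lintegral_enorm _) ?_
      exact le_of_eq (lintegral_congr fun s => hFg_norm t s)
    calc (‖v t‖₊ : ℝ≥0∞) ^ (2:ℝ) ≤ (C ^ (1/2:ℝ) * (W t) ^ (1/2:ℝ)) ^ (2:ℝ) :=
          ENNReal.rpow_le_rpow (le_trans h0 (holder t)) (by norm_num)
      _ = C * W t := by
          rw [ENNReal.mul_rpow_of_nonneg _ _ (by norm_num : (0:ℝ) ≤ 2),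
            ← ENNReal.rpow_mul, ← ENNReal.rpow_mul]
          norm_num
  set Jn : ℝ × ℝ → ℝ≥0∞ := fun p =>
    ({q : ℝ × ℝ | q.2 < q.1}).indicator (fun q => K q.1 q.2 * φ q.2 ^ (2:ℝ)) p with hJndef
  have hJnmeas : Measurable Jn := by
    refine Measurable.indicator ?_ (measurableSet_lt measurable_snd measurable_fst)
    refine Measurable.mul ?_ (hφ2meas.comp measurable_snd)
    exact (Real.continuous_exp.comp (continuous_const.mul
      (continuous_fst.sub continuous_snd))).measurable.ennreal_ofReal
  have hW_eq : ∀ t : ℝ, W t = ∫⁻ s, Jn (t, s) := by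
    intro t
    rw [hWdef]
    dsimp only
    rw [← lintegral_indicator measurableSet_Iio]
    refine lintegral_congr fun s => ?_
    by_cases h : s < t
    · simp [hJndef, Set.indicator_apply, h]
    · simp [hJndef, Set.indicator_apply, h]
  have hWmeas : Measurable W := by
    have hw : W = fun t => ∫⁻ s, Jn (t, s) := funext hW_eq
    rw [hw]
    exact hJnmeas.lintegral_prod_right'
  set Φ : ℝ≥0∞ := ∫⁻ s, φ s ^ (2:ℝ) ∂μ with hΦdef
  have hΦf : Φ = ∫⁻ s, (‖f s‖₊ : ℝ≥0∞) ^ (2:ℝ) ∂μ := by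
    refine lintegral_congr_ae ?_
    filter_upwards [hfg] with s hs
    simp [hφ, hs]
  have hΦvol : (∫⁻ s, φ s ^ (2:ℝ) ∂(volume : Measure ℝ)) = Φ := by
    rw [hΦdef, hμ, ← lintegral_indicator measurableSet_Iic]
    refine lintegral_congr fun s => ?_
    by_cases h : s ∈ Set.Iic a
    · rw [Set.indicator_of_mem h]
    · rw [Set.indicator_of_notMem h]
      simp [hφ, hgdef, Set.indicator_of_notMem h, hsq]
  have hWint : ∫⁻ t, W t ∂μ ≤ C * Φ := by
    have hswap : ∫⁻ t, ∫⁻ s, Jn (t, s) ∂(volume : Measure ℝ) ∂μ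
        = ∫⁻ s, ∫⁻ t, Jn (t, s) ∂μ ∂(volume : Measure ℝ) :=
      lintegral_lintegral_swap hJnmeas.aemeasurable
    calc ∫⁻ t, W t ∂μ = ∫⁻ s, ∫⁻ t, Jn (t, s) ∂μ ∂(volume : Measure ℝ) := by
          rw [← hswap]
          exact lintegral_congr fun t => hW_eq t
      _ ≤ ∫⁻ s, C * φ s ^ (2:ℝ) ∂(volume : Measure ℝ) := by
          refine lintegral_mono fun s => ?_
          have h1 : ∀ t : ℝ, Jn (t, s) = (Set.Ioi s).indicator (fun t => K t s * φ s ^ (2:ℝ)) t := by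
            intro t
            by_cases h : s < t
            · simp [hJndef, Set.indicator_apply, h, Set.mem_Ioi]
            · simp [hJndef, Set.indicator_apply, h, Set.mem_Ioi]
          calc ∫⁻ t, Jn (t, s) ∂μ
              = ∫⁻ t in Set.Ioi s, K t s * φ s ^ (2:ℝ) ∂μ := by
                simp only [h1]
                exact lintegral_indicator measurableSet_Ioi _
            _ ≤ ∫⁻ t in Set.Ioi s, K t s * φ s ^ (2:ℝ) ∂(volume : Measure ℝ) := by
                rw [hμ, Measure.restrict_restrict measurableSet_Ioi]
                exact lintegral_mono' (Measure.restrict_mono Set.inter_subset_left le_rfl) le_rfl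
            _ = (∫⁻ t in Set.Ioi s, K t s ∂(volume : Measure ℝ)) * φ s ^ (2:ℝ) :=
                lintegral_mul_const _ (hKmeas_t s)
            _ = C * φ s ^ (2:ℝ) := by rw [hKint_t s]
      _ = C * Φ := by rw [lintegral_const_mul C hφ2meas, hΦvol]
  have hmain : ∫⁻ t, (‖v t‖₊ : ℝ≥0∞) ^ (2:ℝ) ∂μ ≤ C ^ (2:ℝ) * Φ := by
    calc ∫⁻ t, (‖v t‖₊ : ℝ≥0∞) ^ (2:ℝ) ∂μ ≤ ∫⁻ t, C * W t ∂μ := lintegral_mono hv_bound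
      _ = C * ∫⁻ t, W t ∂μ := lintegral_const_mul C hWmeas
      _ ≤ C * (C * Φ) := mul_le_mul_right hWint _
      _ = C ^ (2:ℝ) * Φ := by rw [hsq C, mul_assoc]
  have hsnf : eLpNorm f 2 μ = (∫⁻ s, (‖f s‖₊ : ℝ≥0∞) ^ (2:ℝ) ∂μ) ^ (1/2:ℝ) := by
    rw [eLpNorm_eq_lintegral_rpow_enorm_toReal (by norm_num) (by norm_num)]
    norm_num
    rfl
  have hsnv : eLpNorm v 2 μ = (∫⁻ t, (‖v t‖₊ : ℝ≥0∞) ^ (2:ℝ) ∂μ) ^ (1/2:ℝ) := by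
    rw [eLpNorm_eq_lintegral_rpow_enorm_toReal (by norm_num) (by norm_num)]
    norm_num
    rfl
  have hΦ_eq : Φ = eLpNorm f 2 μ ^ (2:ℝ) := by
    rw [hΦf, hsnf, ← ENNReal.rpow_mul]
    norm_num
  have hΦ_lt : Φ < ⊤ := by
    rw [hΦ_eq]
    exact ENNReal.rpow_lt_top_of_nonneg (by norm_num) hf.2.ne
  have hfinal : eLpNorm v 2 μ ≤ C * eLpNorm f 2 μ := by
    rw [hsnv]
    calc (∫⁻ t, (‖v t‖₊ : ℝ≥0∞) ^ (2:ℝ) ∂μ) ^ (1/2:ℝ)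
        ≤ (C ^ (2:ℝ) * Φ) ^ (1/2:ℝ) := ENNReal.rpow_le_rpow hmain (by norm_num)
      _ = C * eLpNorm f 2 μ := by
          rw [hΦ_eq, ENNReal.mul_rpow_of_nonneg _ _ (by norm_num : (0:ℝ) ≤ 1/2),
            ← ENNReal.rpow_mul, ← ENNReal.rpow_mul]
          norm_num
  have huv_ae : (fun t : ℝ => ∫ s in Set.Iio t,
      Complex.exp (-Complex.I * lam * ((t : ℂ) - (s : ℂ))) • (expIA A (t - s)) (f s)) =ᵐ[μ] v := by
    filter_upwards [ae_restrict_mem measurableSet_Iic] with t ht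
    exact huv t ht
  have hCabs : ENNReal.ofReal (1 / |lam.im|) = C := by rw [hC, habs]
  refine ⟨?_, ?_, ?_⟩
  · filter_upwards [ae_restrict_mem measurableSet_Iic] with t ht
    have hsm : AEStronglyMeasurable (fun s : ℝ =>
        Complex.exp (-Complex.I * lam * ((t : ℂ) - (s : ℂ))) • (expIA A (t - s)) (f s))
        (volume.restrict (Set.Iio t)) := by
      have h1 : StronglyMeasurable fun s : ℝ => Fg (t, s) :=
        hFgSM.comp_measurable (measurable_const.prodMk measurable_id)
      refine h1.aestronglyMeasurable.congr ?_
      filter_upwards [hfg_t t ht] with s hs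
      simp only [hFgdef, hs]
    have hWt_lt : W t < ⊤ := by
      have hb : W t ≤ ∫⁻ s in Set.Iio t, φ s ^ (2:ℝ) := by
        rw [hWdef]
        refine lintegral_mono_ae ?_
        filter_upwards [ae_restrict_mem measurableSet_Iio] with s hs
        have h1 : (0:ℝ) ≤ t - s := by
          have : s < t := hs
          linarith
        have h2 : lam.im * (t - s) ≤ 0 := by nlinarith
        calc K t s * φ s ^ (2:ℝ) ≤ 1 * φ s ^ (2:ℝ) := by
              refine mul_le_mul_left ?_ _
              simp only [hK]
              exact ENNReal.ofReal_le_one.mpr (Real.exp_le_one_iff.mpr h2)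
          _ = φ s ^ (2:ℝ) := one_mul _
      have hb2 : (∫⁻ s in Set.Iio t, φ s ^ (2:ℝ)) ≤ Φ := by
        calc (∫⁻ s in Set.Iio t, φ s ^ (2:ℝ))
            ≤ ∫⁻ s, φ s ^ (2:ℝ) ∂(volume : Measure ℝ) := setLIntegral_le_lintegral _ _
          _ = Φ := hΦvol
      exact lt_of_le_of_lt (le_trans hb hb2) hΦ_lt
    refine ⟨hsm, ?_⟩
    show (∫⁻ s in Set.Iio t, (‖Complex.exp (-Complex.I * lam * ((t : ℂ) - (s : ℂ))) •
        (expIA A (t - s)) (f s)‖₊ : ℝ≥0∞)) < ⊤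
    have heq : (∫⁻ s in Set.Iio t, (‖Complex.exp (-Complex.I * lam * ((t : ℂ) - (s : ℂ))) •
        (expIA A (t - s)) (f s)‖₊ : ℝ≥0∞)) = ∫⁻ s in Set.Iio t, K t s * φ s := by
      refine lintegral_congr_ae ?_
      filter_upwards [hfg_t t ht] with s hs
      rw [hs]
      exact hFg_norm t s
    rw [heq]
    refine lt_of_le_of_lt (holder t) ?_
    exact ENNReal.mul_lt_top
      (ENNReal.rpow_lt_top_of_nonneg (by norm_num) hCne)
      (ENNReal.rpow_lt_top_of_nonneg (by norm_num) hWt_lt.ne)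
  · exact ⟨hvSM.aestronglyMeasurable.congr huv_ae.symm, by
      rw [eLpNorm_congr_ae huv_ae]
      exact lt_of_le_of_lt hfinal (ENNReal.mul_lt_top hCne.lt_top hf.2)⟩
  · rw [eLpNorm_congr_ae huv_ae, hCabs]
    exact hfinal
end
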